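/- If a word w = a_1...a_n has period p and period q, where a word has period p when a_i = a_{i+p} for all 1 ≤ i ≤ |w| - p, and |w| ≥ p + q - gcd(p,q), then w has period gcd(p,q). -/

import Mathlib

/-- A word `w` has period `p` if letters at distance `p` coincide:
`a_i = a_{i+p}` for all `1 ≤ i ≤ |w| - p` (here 0-indexed). -/
def HasPeriod {α : Type*} (w : List α) (p : ℕ) : Prop :=
  ∀ i, i + p < w.length → w[i]? = w[i + p]?

/-- abstract iteration of a period-like property -/
lemma iter_period {β : Type*} (f : ℕ → β) (g m : ℕ)
    (h : ∀ i, i + g < m → f i = f (i + g)) :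
    ∀ k i, i + k * g < m → f i = f (i + k * g) := by
  intro k
  induction k with
  | zero => intro i _; simp
  | succ k ih =>
    intro i hi
    have h1 : i + g < m := by nlinarith [Nat.zero_le (k * g)]
    have h2 : (i + g) + k * g < m := by
      have : i + (k + 1) * g = i + g + k * g := by ring
      omega
    calc f i = f (i + g) := h i h1
      _ = f ((i + g) + k * g) := ih (i + g) h2
      _ = f (i + (k + 1) * g) := by ring_nf

lemma take_hasPeriod {α : Type*} (w : List α) (q k : ℕ) (hw : HasPeriod w q) :
    HasPeriod (w.take k) q := by
  intro i hi
  have hlen : (w.take k).length = min k w.length := List.length_take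
  have hik : i < k := by omega
  have hiqk : i + q < k := by omega
  have hin : i + q < w.length := by omega
  rw [List.getElem?_take_of_lt hik,
    List.getElem?_take_of_lt hiqk]
  exact hw i hin

lemma take_hasPeriod_sub {α : Type*} (w : List α) (p q : ℕ) (hlt : q < p)
    (hwp : HasPeriod w p) (hwq : HasPeriod w q) :
    HasPeriod (w.take (w.length - q)) (p - q) := by
  intro i hi
  have hlen : (w.take (w.length - q)).length = w.length - q := by
    rw [List.length_take]; omega
  rw [hlen] at hi
  have hip : i + p < w.length := by omega
  have h1 : w[i]? = w[i + p]? := hwp i hip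
  have h2 : w[i + (p - q)]? = w[i + (p - q) + q]? := by
    exact hwq (i + (p - q)) (by omega)
  have he : i + (p - q) + q = i + p := by omega
  rw [he] at h2
  have hik : i < w.length - q := by omega
  have hiqk : i + (p - q) < w.length - q := hi
  rw [List.getElem?_take_of_lt hik,
    List.getElem?_take_of_lt hiqk]
  rw [h1, ← h2]

/-- The key extension step: if `q < p`, `w` has periods `p` and `q`, is long enough,
and the prefix of length `|w| - q` has period `g = gcd p q`, then `w` has period `g`. -/
lemma key_step {α : Type*} (w : List α) (p q : ℕ) (hq : 1 ≤ q) (hlt : q < p)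
    (hwq : HasPeriod w q)
    (hlen : p + q - Nat.gcd p q ≤ w.length)
    (ih : HasPeriod (w.take (w.length - q)) (Nat.gcd p q)) :
    HasPeriod w (Nat.gcd p q) := by
  set n := w.length with hn
  set g := Nat.gcd p q with hg
  have hg1 : 0 < g := Nat.gcd_pos_of_pos_left q (by omega)
  have hgp : g ∣ p := Nat.gcd_dvd_left p q
  have hgq : g ∣ q := Nat.gcd_dvd_right p q
  have hgpq : g ∣ p - q := Nat.dvd_sub hgp hgq
  have hgle : g ≤ p - q := Nat.le_of_dvd (by omega) hgpq
  have hpq : q + g ≤ p := by omega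
  have hgq' : g ≤ q := Nat.le_of_dvd (by omega) hgq
  have hn2q : 2 * q ≤ n := by omega
  have hnq : p - g ≤ n - q := by omega
  -- translate ih to a statement about w
  have hu : ∀ i, i + g < n - q → w[i]? = w[i + g]? := by
    intro i hi
    have hlen' : (w.take (n - q)).length = n - q := by
      rw [List.length_take]; omega
    have := ih i (by rw [hlen']; exact hi)
    have hik : i < n - q := by omega
    have hiqk : i + g < n - q := hi
    rwa [List.getElem?_take_of_lt hik,
      List.getElem?_take_of_lt hiqk] at this
  -- iterated version of hu
  have huk : ∀ k i, i + k * g < n - q → w[i]? = w[i + k * g]? :=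
    iter_period (fun i => w[i]?) g (n - q) hu
  intro i
  induction i using Nat.strong_induction_on with
  | _ i IH =>
    intro hi
    by_cases hcase : i + g < n - q
    · exact hu i hcase
    · push_neg at hcase
      have hiq : q ≤ i + g := by omega
      by_cases hiq2 : q ≤ i
      · -- step down both indices by q and recurse
        have h1 : w[i - q]? = w[i]? := by
          have := hwq (i - q) (by omega)
          rwa [Nat.sub_add_cancel hiq2] at this
        have h2 : w[i + g - q]? = w[i + g]? := by
          have := hwq (i + g - q) (by omega)
          rwa [Nat.sub_add_cancel hiq] at this
        have h3 : w[i - q]? = w[i - q + g]? := IH (i - q) (by omega) (by omega)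
        have he : i - q + g = i + g - q := by omega
        rw [← h1, ← h2, ← he, h3]
      · -- i < q : step down only the upper index, then use iterated prefix period
        push_neg at hiq2
        have h2 : w[i + g - q]? = w[i + g]? := by
          have := hwq (i + g - q) (by omega)
          rwa [Nat.sub_add_cancel hiq] at this
        obtain ⟨k, hk⟩ : g ∣ q - g := Nat.dvd_sub hgq dvd_rfl
        have hk' : k * g = g * k := Nat.mul_comm k g
        have he : i + g - q + k * g = i := by omega
        have h3 : w[i + g - q]? = w[i + g - q + k * g]? :=
          huk k (i + g - q) (by omega)
        rw [← h2, h3, he]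

lemma fine_wilf_aux {α : Type*} : ∀ (N p q : ℕ) (w : List α), p + q ≤ N → 1 ≤ p → 1 ≤ q →
    HasPeriod w p → HasPeriod w q → p + q - Nat.gcd p q ≤ w.length →
    HasPeriod w (Nat.gcd p q) := by
  intro N
  induction N with
  | zero => intro p q w h hp; omega
  | succ N IH =>
    intro p q w hN hp hq hwp hwq hlen
    rcases lt_trichotomy p q with h | h | h
    · -- p < q : symmetric case
      rw [Nat.gcd_comm]
      have hgcd : Nat.gcd (q - p) p = Nat.gcd q p := Nat.gcd_sub_self_left (le_of_lt h)
      apply key_step w q p hp h hwp (by rw [Nat.gcd_comm]; omega)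
      rw [← hgcd]
      apply IH (q - p) p (w.take (w.length - p)) (by omega) (by omega) hp
        (take_hasPeriod_sub w q p h hwq hwp) (take_hasPeriod w p _ hwp)
      have hl : (w.take (w.length - p)).length = w.length - p := by
        rw [List.length_take]; omega
      rw [hl, hgcd, Nat.gcd_comm]
      have hgle : Nat.gcd p q ≤ q - p := by
        apply Nat.le_of_dvd (by omega) (Nat.dvd_sub (Nat.gcd_dvd_right p q) (Nat.gcd_dvd_left p q))
      omega
    · subst h
      simp only [Nat.gcd_self]
      exact hwp
    · -- q < p
      have hgcd : Nat.gcd (p - q) q = Nat.gcd p q := Nat.gcd_sub_self_left (le_of_lt h)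
      apply key_step w p q hq h hwq hlen
      rw [← hgcd]
      apply IH (p - q) q (w.take (w.length - q)) (by omega) (by omega) hq
        (take_hasPeriod_sub w p q h hwp hwq) (take_hasPeriod w q _ hwq)
      have hl : (w.take (w.length - q)).length = w.length - q := by
        rw [List.length_take]; omega
      rw [hl, hgcd]
      have hgle : Nat.gcd p q ≤ p - q := by
        apply Nat.le_of_dvd (by omega) (Nat.dvd_sub (Nat.gcd_dvd_left p q) (Nat.gcd_dvd_right p q))
      omega

/-- Fine and Wilf's theorem: if `w` has periods `p` and `q` and
`|w| ≥ p + q - gcd(p,q)`, then `w` has period `gcd(p,q)`. -/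
theorem fine_wilf {α : Type*} (w : List α) (p q : ℕ) (hp : 1 ≤ p) (hq : 1 ≤ q)
    (hwp : HasPeriod w p) (hwq : HasPeriod w q)
    (hlen : p + q - Nat.gcd p q ≤ w.length) :
    HasPeriod w (Nat.gcd p q) := by
  exact fine_wilf_aux (p + q) p q w le_rfl hp hq hwp hwq hlen
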